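/- arXiv:1805.09312 — 3 statements merged into one kernel-verified Lean document; each statement's English description precedes it below -/
import Mathlib

section
/- The Koranyi inversion on the Heisenberg group satisfies d(ι(h), ι(h')) = d(h,h') / (‖h‖ · ‖h'‖) for all nonzero h, h' in the Heisenberg group. -/
/-- The Heisenberg group law on `ℂ × ℝ`. -/
noncomputable def hMul (p q : ℂ × ℝ) : ℂ × ℝ :=
  (p.1 + q.1, p.2 + q.2 + 2 * ((starRingEnd ℂ) p.1 * q.1).im)

/-- The Heisenberg group inverse. -/
def hInv (p : ℂ × ℝ) : ℂ × ℝ := (-p.1, -p.2)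

/-- The Koranyi heisGauge. -/
noncomputable def heisGauge (p : ℂ × ℝ) : ℝ :=
  (‖p.1‖ ^ 4 + p.2 ^ 2) ^ ((1 : ℝ) / 4)

/-- The Cygan metric. -/
noncomputable def cygan (p q : ℂ × ℝ) : ℝ := heisGauge (hMul (hInv p) q)

/-- The Koranyi inversion. -/
noncomputable def koranyiInv (p : ℂ × ℝ) : ℂ × ℝ :=
  (-p.1 / (((‖p.1‖ ^ 2 : ℝ) : ℂ) + (p.2 : ℂ) * Complex.I),
    -p.2 / (‖p.1‖ ^ 4 + p.2 ^ 2))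

/-- Complexified gauge: `|z|² + i t`. -/
noncomputable def nu (p : ℂ × ℝ) : ℂ :=
  ((‖p.1‖ ^ 2 : ℝ) : ℂ) + (p.2 : ℂ) * Complex.I

lemma abs_nu (p : ℂ × ℝ) :
    ‖nu p‖ = (‖p.1‖ ^ 4 + p.2 ^ 2) ^ ((1:ℝ)/2) := by
  rw [nu, Complex.norm_add_mul_I, Real.sqrt_eq_rpow]
  ring_nf

lemma gauge_eq (p : ℂ × ℝ) :
    heisGauge p = ‖nu p‖ ^ ((1:ℝ)/2) := by
  rw [abs_nu, heisGauge, ← Real.rpow_mul (by positivity)]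
  norm_num

lemma nu_ne (p : ℂ × ℝ) (hp : p ≠ (0,0)) : nu p ≠ 0 := by
  intro hc
  apply hp
  rw [nu] at hc
  simp [Complex.ext_iff, pow_two, Complex.mul_re, Complex.mul_im] at hc
  exact Prod.ext (Complex.ext hc.1.1 hc.1.2) hc.2

lemma fst_koranyiInv (p : ℂ × ℝ) : (koranyiInv p).1 = -p.1 / nu p := rfl

lemma sq_abs_nu (p : ℂ × ℝ) :
    ‖nu p‖ ^ 2 = ‖p.1‖ ^ 4 + p.2 ^ 2 := by
  rw [abs_nu, ← Real.rpow_natCast _ 2, ← Real.rpow_mul (by positivity)]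
  norm_num

lemma nu_koranyiInv (p : ℂ × ℝ) (hp : p ≠ (0,0)) : nu (koranyiInv p) = 1 / nu p := by
  have hne := nu_ne p hp
  have hDne : ‖p.1‖ ^ 4 + p.2 ^ 2 ≠ 0 := by
    intro h0
    apply hne
    have h1 : ‖nu p‖ = 0 := by
      nlinarith [sq_abs_nu p, norm_nonneg (nu p)]
    exact norm_eq_zero.mp h1
  have h1 : ‖(koranyiInv p).1‖ ^ 2
      = ‖p.1‖ ^ 2 / (‖p.1‖ ^ 4 + p.2 ^ 2) := by
    rw [fst_koranyiInv, norm_div, norm_neg, div_pow, sq_abs_nu]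
  rw [nu, h1]
  show _ + ((-p.2 / (‖p.1‖ ^ 4 + p.2 ^ 2) : ℝ) : ℂ) * Complex.I = 1 / nu p
  have hDc : ((‖p.1‖ ^ 4 + p.2 ^ 2 : ℝ):ℂ) ≠ 0 := by exact_mod_cast hDne
  rw [nu] at hne ⊢
  push_cast at hDc hne ⊢
  field_simp
  ring_nf
  rw [Complex.I_sq]
  ring

lemma cygan_eq (p q : ℂ × ℝ) :
    cygan p q = ‖(starRingEnd ℂ) (nu p) + nu q
      - 2 * (starRingEnd ℂ) p.1 * q.1‖ ^ ((1:ℝ)/2) := by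
  rw [cygan, gauge_eq]
  congr 2
  rw [Complex.ext_iff]
  constructor <;>
    simp [hMul, hInv, nu, Complex.sq_norm, Complex.normSq_apply, Complex.add_re,
      Complex.add_im, Complex.mul_re, Complex.mul_im, Complex.sub_re, Complex.sub_im] <;>
    ring

/-- The Koranyi inversion satisfies
`d(ι h, ι h') = d(h,h') / (‖h‖·‖h'‖)` for nonzero `h, h'`. -/
theorem cygan_koranyiInv (h h' : ℂ × ℝ) (hh : h ≠ (0, 0)) (hh' : h' ≠ (0, 0)) :
    cygan (koranyiInv h) (koranyiInv h') = cygan h h' / (heisGauge h * heisGauge h') := by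
  have hn := nu_ne h hh
  have hn' := nu_ne h' hh'
  have hcn : (starRingEnd ℂ) (nu h) ≠ 0 := by simpa using hn
  rw [cygan_eq, cygan_eq, gauge_eq, gauge_eq, nu_koranyiInv h hh, nu_koranyiInv h' hh',
    fst_koranyiInv, fst_koranyiInv]
  have key : (starRingEnd ℂ) (1 / nu h) + 1 / nu h'
      - 2 * (starRingEnd ℂ) (-h.1 / nu h) * (-h'.1 / nu h')
      = ((starRingEnd ℂ) (nu h) + nu h' - 2 * (starRingEnd ℂ) h.1 * h'.1)
        / ((starRingEnd ℂ) (nu h) * nu h') := by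
    simp only [map_div₀, map_one, map_neg]
    field_simp
    ring
  rw [key, norm_div, norm_mul, Complex.norm_conj]
  rw [Real.div_rpow (by positivity) (by positivity),
    Real.mul_rpow (by positivity) (by positivity)]
end

section
/- Let T : X → X be a measurable transformation of a measure space (X,μ) with μ(X) > 0, and suppose T is conservative and nonsingular. Suppose C ⊆ X has positive measure and X = ⋃_{i≥0} T^{-i} C up to null sets. If the induced (first-return) transformation of T on C is ergodic, then T is ergodic on X. -/
open MeasureTheory

/-- The first return time of `x` to `C` under `T` (0 if there is no return). -/
noncomputable def returnTime {X : Type*} (T : X → X) (C : Set X) (x : X) : ℕ := by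
  classical exact if h : ∃ n, 0 < n ∧ T^[n] x ∈ C then Nat.find h else 0

/-- The transformation induced by `T` on `C` (the first-return map). -/
noncomputable def inducedMap {X : Type*} (T : X → X) (C : Set X) (x : X) : X :=
  T^[returnTime T C x] x

/-- Preimages of null sets under iterates of a nonsingular map are null. -/
lemma iterate_preimage_null {X : Type*} [MeasurableSpace X] (μ : Measure X)
    (T : X → X) (hT : Measurable T)
    (hns : ∀ A : Set X, MeasurableSet A → μ A = 0 → μ (T ⁻¹' A) = 0) :
    ∀ (n : ℕ) (A : Set X), MeasurableSet A → μ A = 0 → μ (T^[n] ⁻¹' A) = 0 := by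
  intro n
  induction n with
  | zero => intro A _ h; simpa using h
  | succ n ih =>
    intro A hA h
    rw [Function.iterate_succ, Set.preimage_comp]
    exact hns _ (hA.preimage (hT.iterate n)) (ih A hA h)

/-- A quasi-invariant set is quasi-invariant under all iterates. -/
lemma iterate_symmDiff_null {X : Type*} [MeasurableSpace X] (μ : Measure X)
    (T : X → X) (hT : Measurable T)
    (hns : ∀ A : Set X, MeasurableSet A → μ A = 0 → μ (T ⁻¹' A) = 0)
    (B : Set X) (hBm : MeasurableSet B) (hB : μ (symmDiff (T ⁻¹' B) B) = 0) :
    ∀ n : ℕ, μ (symmDiff (T^[n] ⁻¹' B) B) = 0 := by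
  intro n
  induction n with
  | zero => simp
  | succ n ih =>
    have h1 : T^[n + 1] ⁻¹' B = T^[n] ⁻¹' (T ⁻¹' B) := by
      rw [Function.iterate_succ', Set.preimage_comp]
    have h2 : symmDiff (T^[n + 1] ⁻¹' B) (T^[n] ⁻¹' B)
        = T^[n] ⁻¹' (symmDiff (T ⁻¹' B) B) := by
      rw [h1]
      simp [Set.symmDiff_def, Set.preimage_union, Set.preimage_diff]
    have h3 : μ (symmDiff (T^[n + 1] ⁻¹' B) (T^[n] ⁻¹' B)) = 0 := by
      rw [h2]
      exact iterate_preimage_null μ T hT hns n _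
        (((hBm.preimage hT).symmDiff hBm)) hB
    have htri : symmDiff (T^[n + 1] ⁻¹' B) B ⊆
        symmDiff (T^[n + 1] ⁻¹' B) (T^[n] ⁻¹' B) ∪ symmDiff (T^[n] ⁻¹' B) B :=
      symmDiff_triangle _ _ _
    have := measure_mono_null htri (by
      exact measure_union_null h3 ih)
    exact this

/-- If a set is quasi-invariant under all iterates, meets `C` in a null set, and the
preimages of `C` cover the space mod null, then the set is null. -/
lemma null_of_inter_null {X : Type*} [MeasurableSpace X] (μ : Measure X)
    (T : X → X) (hT : Measurable T)
    (hns : ∀ A : Set X, MeasurableSet A → μ A = 0 → μ (T ⁻¹' A) = 0)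
    (C : Set X) (hC : MeasurableSet C)
    (hcover : μ (Set.univ \ ⋃ i : ℕ, T^[i] ⁻¹' C) = 0)
    (B : Set X) (hBm : MeasurableSet B)
    (hBn : ∀ n : ℕ, μ (symmDiff (T^[n] ⁻¹' B) B) = 0)
    (hBC : μ (B ∩ C) = 0) : μ B = 0 := by
  have key : ∀ n : ℕ, μ (B ∩ T^[n] ⁻¹' C) = 0 := by
    intro n
    have hsub : B ∩ T^[n] ⁻¹' C ⊆ T^[n] ⁻¹' (B ∩ C) ∪ symmDiff (T^[n] ⁻¹' B) B := by
      rintro x ⟨hxB, hxC⟩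
      by_cases h : T^[n] x ∈ B
      · exact Or.inl ⟨h, hxC⟩
      · exact Or.inr (Set.mem_symmDiff.2 (Or.inr ⟨hxB, h⟩))
    refine measure_mono_null hsub (measure_union_null ?_ (hBn n))
    exact iterate_preimage_null μ T hT hns n _ (hBm.inter hC) hBC
  have hsub : B ⊆ (Set.univ \ ⋃ i : ℕ, T^[i] ⁻¹' C) ∪ ⋃ n : ℕ, B ∩ T^[n] ⁻¹' C := by
    intro x hx
    by_cases h : x ∈ ⋃ i : ℕ, T^[i] ⁻¹' C
    · obtain ⟨_, ⟨i, rfl⟩, hi⟩ := h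
      exact Or.inr (Set.mem_iUnion.2 ⟨i, hx, hi⟩)
    · exact Or.inl ⟨trivial, h⟩
  refine measure_mono_null hsub (measure_union_null hcover ?_)
  refine le_antisymm ?_ zero_le
  calc μ (⋃ n : ℕ, B ∩ T^[n] ⁻¹' C) ≤ ∑' n : ℕ, μ (B ∩ T^[n] ⁻¹' C) :=
        measure_iUnion_le _
    _ = 0 := by simp [key]

/-- If `T` is conservative and nonsingular on a measure space of positive measure,
`C` has positive measure, `X = ⋃ᵢ T⁻ⁱ C` up to null sets, almost every point of `C`
returns to `C`, and the induced first-return transformation on `C` is ergodic, then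
`T` is ergodic. -/
theorem ergodic_of_induced_ergodic {X : Type*} [MeasurableSpace X] (μ : Measure X)
    (T : X → X) (hT : Measurable T) (hcons : Conservative T μ)
    (hns : ∀ A : Set X, MeasurableSet A → μ A = 0 → μ (T ⁻¹' A) = 0)
    (hX : 0 < μ Set.univ)
    (C : Set X) (hC : MeasurableSet C) (hCpos : 0 < μ C)
    (hcover : μ (Set.univ \ ⋃ i : ℕ, T^[i] ⁻¹' C) = 0)
    (hret : ∀ᵐ x ∂μ.restrict C, ∃ n, 0 < n ∧ T^[n] x ∈ C)
    (herg : ∀ B : Set X, MeasurableSet B → B ⊆ C →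
      μ (symmDiff (inducedMap T C ⁻¹' B) B ∩ C) = 0 → μ B = 0 ∨ μ (C \ B) = 0) :
    ∀ B : Set X, MeasurableSet B → μ (symmDiff (T ⁻¹' B) B) = 0 →
      μ B = 0 ∨ μ (Set.univ \ B) = 0 := by
  intro B hBm hB
  classical
  -- quasi-invariance under all iterates
  have hBn : ∀ n : ℕ, μ (symmDiff (T^[n] ⁻¹' B) B) = 0 :=
    iterate_symmDiff_null μ T hT hns B hBm hB
  -- the bad (non-returning) part of C is null
  have hGnull : μ ({x | ¬ ∃ n, 0 < n ∧ T^[n] x ∈ C} ∩ C) = 0 := by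
    have := hret
    rw [MeasureTheory.ae_iff] at this
    rw [← Measure.restrict_apply' hC]
    exact this
  -- B ∩ C is quasi-invariant under the induced map
  have hinv : μ (symmDiff (inducedMap T C ⁻¹' (B ∩ C)) (B ∩ C) ∩ C) = 0 := by
    have hsub : symmDiff (inducedMap T C ⁻¹' (B ∩ C)) (B ∩ C) ∩ C ⊆
        ({x | ¬ ∃ n, 0 < n ∧ T^[n] x ∈ C} ∩ C) ∪
          ⋃ n : ℕ, symmDiff (T^[n] ⁻¹' B) B := by
      rintro x ⟨hxs, hxC⟩
      by_cases h : ∃ n, 0 < n ∧ T^[n] x ∈ C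
      · right
        have hrt : returnTime T C x = Nat.find h := by
          simp [returnTime, dif_pos h]
        have hretC : T^[returnTime T C x] x ∈ C := by
          rw [hrt]; exact (Nat.find_spec h).2
        have hψ : inducedMap T C x = T^[returnTime T C x] x := rfl
        rcases Set.mem_symmDiff.1 hxs with ⟨h1, h2⟩ | ⟨h1, h2⟩
        · -- x ∈ ψ⁻¹(B∩C), x ∉ B∩C, but x ∈ C so x ∉ B
          have hxB : x ∉ B := fun hb => h2 ⟨hb, hxC⟩
          have : T^[returnTime T C x] x ∈ B := by
            have := h1; rw [Set.mem_preimage, hψ] at this; exact this.1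
          exact Set.mem_iUnion.2 ⟨returnTime T C x,
            Set.mem_symmDiff.2 (Or.inl ⟨this, hxB⟩)⟩
        · -- x ∈ B∩C, ψ x ∉ B∩C, but ψ x ∈ C so ψ x ∉ B
          have hψB : T^[returnTime T C x] x ∉ B := by
            intro hb
            exact h2 (by rw [Set.mem_preimage, hψ]; exact ⟨hb, hretC⟩)
          exact Set.mem_iUnion.2 ⟨returnTime T C x,
            Set.mem_symmDiff.2 (Or.inr ⟨h1.1, hψB⟩)⟩
      · exact Or.inl ⟨h, hxC⟩
    refine measure_mono_null hsub (measure_union_null hGnull ?_)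
    refine le_antisymm ?_ zero_le
    calc μ (⋃ n : ℕ, symmDiff (T^[n] ⁻¹' B) B)
        ≤ ∑' n : ℕ, μ (symmDiff (T^[n] ⁻¹' B) B) := measure_iUnion_le _
      _ = 0 := by simp [hBn]
  -- apply ergodicity of the induced map to B ∩ C
  rcases herg (B ∩ C) (hBm.inter hC) Set.inter_subset_right hinv with h0 | h0
  · exact Or.inl (null_of_inter_null μ T hT hns C hC hcover B hBm hBn h0)
  · right
    have hCB : μ (C \ B) = 0 := by
      have : C \ (B ∩ C) = C \ B := Set.diff_inter_self_eq_diff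
      rwa [this] at h0
    have hBc : μ (Bᶜ ∩ C) = 0 := by
      have : Bᶜ ∩ C = C \ B := by rw [Set.inter_comm, Set.diff_eq]
      rwa [this]
    have hBcn : ∀ n : ℕ, μ (symmDiff (T^[n] ⁻¹' Bᶜ) Bᶜ) = 0 := by
      intro n
      have : T^[n] ⁻¹' Bᶜ = (T^[n] ⁻¹' B)ᶜ := rfl
      rw [this, compl_symmDiff_compl]
      exact hBn n
    have := null_of_inter_null μ T hT hns C hC hcover Bᶜ hBm.compl hBcn hBc
    rwa [Set.compl_eq_univ_diff] at this
end

section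
/- Let T : K → K be measurable on a probability space and suppose T is measurably isomorphic to a skew product T_c ⋊ f on K_c × R over an ergodic transformation T_c on K_c, where R is a finite set of cardinality n and f(z,·) : R → R is a bijection for a.e. z. Then every T-invariant positive-measure subset A of K satisfies μ(A) ≥ 1/n (with respect to the product of the T_c-quasi-invariant measure on K_c, normalized, and normalized counting measure on R). Consequently, T has at most n ergodic components. -/
open MeasureTheory ENNReal

/-- Let `T = T_c ⋊ f` be a skew product on `K_c × R` over an ergodic transformation
`T_c` of a probability space, where `R` is finite with `n` elements and `f(z,·)` is a
bijection of `R` for a.e. `z`. With the product of the base measure and the normalized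
counting measure on `R`, every `T`-invariant set of positive measure has measure at
least `1/n`. -/
theorem skew_product_invariant_measure_bound
    {Kc : Type*} [MeasurableSpace Kc] (μc : Measure Kc) [IsProbabilityMeasure μc]
    {R : Type*} [Fintype R] [MeasurableSpace R] [MeasurableSingletonClass R]
    [Nonempty R]
    (Tc : Kc → Kc) (hTc : Measurable Tc)
    (hTcerg : ∀ B : Set Kc, MeasurableSet B →
      μc (symmDiff (Tc ⁻¹' B) B) = 0 → μc B = 0 ∨ μc Bᶜ = 0)
    (f : Kc → R → R)
    (hf : ∀ᵐ z ∂μc, Function.Bijective (f z))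
    (S : Kc × R → Kc × R) (hS : S = fun p => (Tc p.1, f p.1 p.2))
    (hSmeas : Measurable S)
    (ν : Measure R) (hν : ν = ((Fintype.card R : ℝ≥0∞))⁻¹ • Measure.count)
    (A : Set (Kc × R)) (hA : MeasurableSet A)
    (hAinv : (μc.prod ν) (symmDiff (S ⁻¹' A) A) = 0)
    (hApos : 0 < (μc.prod ν) A) :
    ((Fintype.card R : ℝ≥0∞))⁻¹ ≤ (μc.prod ν) A := by
  subst hν
  set n : ℝ≥0∞ := (Fintype.card R : ℝ≥0∞) with hn
  have hn0 : n ≠ 0 := by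
    simp [hn, Fintype.card_ne_zero]
  have hntop : n ≠ ∞ := by simp [hn]
  set ν : Measure R := n⁻¹ • Measure.count with hνdef
  haveI : SFinite ν := by infer_instance
  have hνnull : ∀ s : Set R, ν s = 0 ↔ s = ∅ := by
    intro s
    simp only [hνdef, Measure.smul_apply, smul_eq_mul, mul_eq_zero,
      ENNReal.inv_eq_zero, hntop, false_or]
    exact Measure.count_eq_zero_iff
  have hνbound : ∀ s : Set R, s.Nonempty → n⁻¹ ≤ ν s := by
    rintro s ⟨r, hr⟩
    calc n⁻¹ = ν {r} := by
          simp [hνdef, Measure.count_singleton]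
      _ ≤ ν s := measure_mono (Set.singleton_subset_iff.2 hr)
  set g : Kc → ℝ≥0∞ := fun z => ν (Prod.mk z ⁻¹' A) with hg
  have hgmeas : Measurable g := measurable_measure_prodMk_left hA
  set B : Set Kc := {z | g z = 0}ᶜ with hB
  have hBmeas : MeasurableSet B := (hgmeas (measurableSet_singleton 0)).compl
  -- fiberwise invariance a.e.
  have hfib : ∀ᵐ z ∂μc, Prod.mk z ⁻¹' (S ⁻¹' A) = Prod.mk z ⁻¹' A := by
    have h1 : (μc.prod ν) (symmDiff (S ⁻¹' A) A)
        = ∫⁻ z, ν (Prod.mk z ⁻¹' symmDiff (S ⁻¹' A) A) ∂μc :=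
      Measure.prod_apply (((hSmeas hA).symmDiff hA))
    rw [hAinv] at h1
    have h2 := (lintegral_eq_zero_iff
        (measurable_measure_prodMk_left ((hSmeas hA).symmDiff hA))).1 h1.symm
    filter_upwards [h2] with z hz
    have h3 : Prod.mk z ⁻¹' symmDiff (S ⁻¹' A) A = ∅ := (hνnull _).1 hz
    rw [Set.preimage_symmDiff] at h3
    exact symmDiff_eq_bot.1 h3
  have hae : ∀ᵐ z ∂μc, (g (Tc z) = 0 ↔ g z = 0) := by
    filter_upwards [hfib, hf] with z hzfib hzbij
    have hfz : Prod.mk z ⁻¹' (S ⁻¹' A) = f z ⁻¹' (Prod.mk (Tc z) ⁻¹' A) := by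
      subst hS; rfl
    rw [hfz] at hzfib
    simp only [hg, hνnull]
    constructor
    · intro h
      rw [← hzfib, h, Set.preimage_empty]
    · intro h
      by_contra hne
      obtain ⟨r, hr⟩ := Set.nonempty_iff_ne_empty.2 hne
      obtain ⟨x, hx⟩ := hzbij.2 r
      have : x ∈ f z ⁻¹' (Prod.mk (Tc z) ⁻¹' A) := by
        simp [Set.mem_preimage, hx, hr]
      rw [hzfib, h] at this
      exact this
  have hBinv : μc (symmDiff (Tc ⁻¹' B) B) = 0 := by
    have hsub : symmDiff (Tc ⁻¹' B) B ⊆ {z | ¬(g (Tc z) = 0 ↔ g z = 0)} := by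
      intro z hz
      rcases Set.mem_symmDiff.1 hz with ⟨h1, h2⟩ | ⟨h1, h2⟩ <;>
        simp only [hB, Set.mem_preimage, Set.mem_compl_iff, Set.mem_setOf_eq,
          not_not] at h1 h2 ⊢
      · intro h; exact h1 (h.2 h2)
      · intro h; exact h1 (h.1 h2)
    exact measure_mono_null hsub (ae_iff.1 hae)
  rcases hTcerg B hBmeas hBinv with hB0 | hBc0
  · exfalso
    have : (μc.prod ν) A = 0 := by
      rw [Measure.prod_apply hA, lintegral_eq_zero_iff hgmeas]
      exact ae_iff.2 hB0
    exact absurd this hApos.ne'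
  · have hgae : ∀ᵐ z ∂μc, n⁻¹ ≤ g z := by
      have : ∀ᵐ z ∂μc, z ∈ B := by
        rw [ae_iff]
        simpa [hB] using hBc0
      filter_upwards [this] with z hz
      have : Prod.mk z ⁻¹' A ≠ ∅ := fun h => hz (by simp [hg, hνnull, h])
      exact hνbound _ (Set.nonempty_iff_ne_empty.2 this)
    calc n⁻¹ = ∫⁻ _, n⁻¹ ∂μc := by simp
      _ ≤ ∫⁻ z, g z ∂μc := lintegral_mono_ae hgae
      _ = (μc.prod ν) A := (Measure.prod_apply hA).symm
end
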